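/- For $0<\theta_0<\theta_1$, $M>0$ and any $\eta\in\mathbb{R}$ in the admissible range of both tilting parameters, the identities $\mathcal{H}_1(\epsilon_\eta^1)=\mathcal{H}_0(\epsilon_\eta^0)$ hold, where $\epsilon_\eta^j = \frac{(\theta_1^2-\theta_0^2)^2M^2-4\theta_j^2(-2\eta+(\theta_1-\theta_0)M)^2}{4(\theta_1^2-\theta_0^2)(-2\eta+(\theta_1-\theta_0)M)^2}$ for $j=0,1$, $\mathcal{H}_j(\epsilon)=-\frac12\ln\big(\frac12+\frac12\mathcal{D}_j(\epsilon)\big)$, and $\mathcal{D}_j(\epsilon)=\frac{\theta_j+(\theta_1-\theta_0)\epsilon}{\sqrt{\theta_j^2+(\theta_1^2-\theta_0^2)\epsilon}}$. Equivalently, $\mathcal{D}_1(\epsilon_\eta^1)=\mathcal{D}_0(\epsilon_\eta^0)$. -/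

import Mathlib

theorem stmt11 (θ0 θ1 M η : ℝ) (h0 : 0 < θ0) (h01 : θ0 < θ1) (hM : 0 < M)
    (hden : 2 * η ≠ (θ1 - θ0) * M)
    (ε0 ε1 : ℝ)
    (hε0 : ε0 = ((θ1 ^ 2 - θ0 ^ 2) ^ 2 * M ^ 2
        - 4 * θ0 ^ 2 * (-2 * η + (θ1 - θ0) * M) ^ 2) /
        (4 * (θ1 ^ 2 - θ0 ^ 2) * (-2 * η + (θ1 - θ0) * M) ^ 2))
    (hε1 : ε1 = ((θ1 ^ 2 - θ0 ^ 2) ^ 2 * M ^ 2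
        - 4 * θ1 ^ 2 * (-2 * η + (θ1 - θ0) * M) ^ 2) /
        (4 * (θ1 ^ 2 - θ0 ^ 2) * (-2 * η + (θ1 - θ0) * M) ^ 2))
    (hpos0 : 0 < θ0 ^ 2 + (θ1 ^ 2 - θ0 ^ 2) * ε0)
    (hpos1 : 0 < θ1 ^ 2 + (θ1 ^ 2 - θ0 ^ 2) * ε1) :
    (θ1 + (θ1 - θ0) * ε1) / Real.sqrt (θ1 ^ 2 + (θ1 ^ 2 - θ0 ^ 2) * ε1)
      = (θ0 + (θ1 - θ0) * ε0) / Real.sqrt (θ0 ^ 2 + (θ1 ^ 2 - θ0 ^ 2) * ε0)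
    ∧ -(1 / 2) * Real.log (1 / 2 + 1 / 2 *
        ((θ1 + (θ1 - θ0) * ε1) / Real.sqrt (θ1 ^ 2 + (θ1 ^ 2 - θ0 ^ 2) * ε1)))
      = -(1 / 2) * Real.log (1 / 2 + 1 / 2 *
        ((θ0 + (θ1 - θ0) * ε0) / Real.sqrt (θ0 ^ 2 + (θ1 ^ 2 - θ0 ^ 2) * ε0))) := by
  have hd : (-2 * η + (θ1 - θ0) * M) ≠ 0 := by
    intro h; apply hden; linarith
  have hs : θ1 ^ 2 - θ0 ^ 2 ≠ 0 := by nlinarith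
  have hD : 4 * (θ1 ^ 2 - θ0 ^ 2) * (-2 * η + (θ1 - θ0) * M) ^ 2 ≠ 0 :=
    mul_ne_zero (mul_ne_zero (by norm_num) hs) (pow_ne_zero 2 hd)
  have hkey : ε1 = ε0 - 1 := by
    rw [hε0, hε1, div_sub' hD]
    ring_nf
  have e1 : θ1 ^ 2 + (θ1 ^ 2 - θ0 ^ 2) * ε1 = θ0 ^ 2 + (θ1 ^ 2 - θ0 ^ 2) * ε0 := by
    rw [hkey]; ring
  have e2 : θ1 + (θ1 - θ0) * ε1 = θ0 + (θ1 - θ0) * ε0 := by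
    rw [hkey]; ring
  rw [e1, e2]
  exact ⟨rfl, rfl⟩
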